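/- arXiv:1707.07992 — 2 statements merged into one kernel-verified Lean document; each statement's English description precedes it below -/
import Mathlib

section
/- Let A = A_C(Λ) be a non-degenerate code algebra and fix i ∈ {1,…,n}. If a_{i,α} ≠ 1 for all α ∈ C* with α_i = 1, then the adjoint map ad_{t_i} : x ↦ t_i·x is diagonalisable with eigenvalue set {1, 0} ∪ {a_{i,α} : α ∈ C*, α_i = 1}, and A = A₁ ⊕ A₀ ⊕ (⊕ A_{a_{i,α}}), where A₁ = span{t_i}, A₀ = span{t_j : j ≠ i} ∪ {e^α : α ∈ C*, α_i = 0}, and for each eigenvalue a, A_a = span{e^β : β ∈ C*, β_i = 1, a_{i,β} = a}. Moreover dim A₀ = |C|/2 + n − 2. -/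
abbrev Word (n : ℕ) := Fin n → ZMod 2

def wsupp {n : ℕ} (α : Word n) : Finset (Fin n) :=
  Finset.univ.filter fun i => α i = 1

def dotW {n : ℕ} (u v : Word n) : ZMod 2 := ∑ i, u i * v i

def IsStar {n : ℕ} (C : Submodule (ZMod 2) (Word n)) (α : Word n) : Prop :=
  α ∈ C ∧ α ≠ 0 ∧ α ≠ 1

structure CodeAlgebra (F : Type*) [Field F] {n : ℕ} (C : Submodule (ZMod 2) (Word n))
    (a : Fin n → Word n → F) (b : Word n → Word n → F) (c : Fin n → Word n → F)
    (A : Type*) [AddCommGroup A] [Module F A] where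
  mul : A →ₗ[F] A →ₗ[F] A
  t : Fin n → A
  e : Word n → A
  bas : Module.Basis (Fin n ⊕ {α : Word n // IsStar C α}) F A
  bas_t : ∀ i, bas (Sum.inl i) = t i
  bas_e : ∀ α, bas (Sum.inr α) = e α.1
  mul_comm : ∀ x y : A, mul x y = mul y x
  t_mul_t : ∀ i j, mul (t i) (t j) = if i = j then t i else 0
  t_mul_e : ∀ (i : Fin n) (α : Word n), IsStar C α →
    mul (t i) (e α) = if α i = 1 then a i α • e α else 0
  e_mul_e : ∀ (α β : Word n), IsStar C α → IsStar C β → α ≠ β → α + β ≠ 1 →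
    mul (e α) (e β) = b α β • e (α + β)
  e_mul_self : ∀ (α : Word n), IsStar C α →
    mul (e α) (e α) = ∑ i ∈ wsupp α, c i α • t i
  e_mul_compl : ∀ (α β : Word n), IsStar C α → IsStar C β → α + β = 1 →
    mul (e α) (e β) = 0

def Nondeg {F : Type*} [Field F] {n : ℕ} (C : Submodule (ZMod 2) (Word n))
    (a : Fin n → Word n → F) (b : Word n → Word n → F) (c : Fin n → Word n → F) : Prop :=
  (∀ i : Fin n, ∃ α ∈ C, α i = 1) ∧ (∃ α, IsStar C α) ∧
  (∀ i α, IsStar C α → α i = 1 → a i α ≠ 0) ∧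
  (∀ α β, IsStar C α → IsStar C β → α ≠ β → α + β ≠ 1 → b α β ≠ 0) ∧
  (∀ i α, IsStar C α → α i = 1 → c i α ≠ 0)

section Diag
open Module Submodule
variable {F : Type*} [Field F] {A : Type*} [AddCommGroup A] [Module F A]
  {ι : Type*} (bb : Basis ι F A) (d : ι → F) (f : Module.End F A)

theorem diag_repr (hd : ∀ k, f (bb k) = d k • bb k) (k : ι) (x : A) :
    bb.repr (f x) k = d k * bb.repr x k := by
  let L1 : A →ₗ[F] F := (Finsupp.lapply k) ∘ₗ (↑bb.repr : A →ₗ[F] (ι →₀ F)) ∘ₗ f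
  let L2 : A →ₗ[F] F := d k • ((Finsupp.lapply k) ∘ₗ (↑bb.repr : A →ₗ[F] (ι →₀ F)))
  have h : L1 = L2 := bb.ext fun j => by
    simp only [L1, L2, LinearMap.coe_comp, Function.comp_apply, LinearMap.smul_apply,
      Finsupp.lapply_apply, hd j, map_smul, Finsupp.smul_apply, Basis.repr_self,
      Finsupp.single_apply, smul_eq_mul]
    by_cases hjk : j = k <;> simp [hjk]
  exact LinearMap.congr_fun h x

theorem diag_eigenspace (hd : ∀ k, f (bb k) = d k • bb k) (μ : F) :
    f.eigenspace μ = span F (bb '' {k | d k = μ}) := by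
  apply le_antisymm
  · intro x hx
    rw [Module.End.mem_eigenspace_iff] at hx
    rw [Basis.mem_span_image]
    intro k hk
    simp only [Finset.mem_coe, Finsupp.mem_support_iff] at hk
    have h1 := diag_repr bb d f hd k x
    rw [hx, map_smul, Finsupp.smul_apply, smul_eq_mul] at h1
    exact mul_right_cancel₀ hk h1.symm
  · rw [span_le]
    rintro _ ⟨k, hk, rfl⟩
    rw [SetLike.mem_coe, Module.End.mem_eigenspace_iff, hd k, hk]

theorem diag_iSup (hd : ∀ k, f (bb k) = d k • bb k) :
    (⨆ μ : F, f.eigenspace μ) = ⊤ := by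
  rw [eq_top_iff, ← bb.span_eq, span_le]
  rintro _ ⟨k, rfl⟩
  exact le_iSup f.eigenspace (d k) (Module.End.mem_eigenspace_iff.mpr (hd k))

theorem diag_hasEigenvalue (hd : ∀ k, f (bb k) = d k • bb k) (μ : F) :
    f.HasEigenvalue μ ↔ ∃ k, d k = μ := by
  constructor
  · intro h
    by_contra hc
    push_neg at hc
    have he : {k | d k = μ} = (∅ : Set ι) := by ext k; simp [hc k]
    rw [Module.End.hasEigenvalue_iff, diag_eigenspace bb d f hd μ, he] at h
    simp at h
  · rintro ⟨k, hk⟩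
    exact Module.End.hasEigenvalue_of_hasEigenvector
      ⟨Module.End.mem_eigenspace_iff.mpr (by rw [hd k, hk]), bb.ne_zero k⟩

theorem diag_finrank (s : Set ι) [Fintype s] :
    Module.finrank F (span F (bb '' s)) = Nat.card s := by
  have hli : LinearIndependent F (fun k : s => bb k) :=
    bb.linearIndependent.comp _ Subtype.val_injective
  rw [Set.image_eq_range bb s, finrank_span_eq_card hli, Nat.card_eq_fintype_card]

end Diag

lemma zmod2_cases (x : ZMod 2) : x = 0 ∨ x = 1 := by
  have : ∀ y : ZMod 2, y = 0 ∨ y = 1 := by decide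
  exact this x

/-- Lemma 3.11: the adjoint of a toral idempotent is diagonalisable, with eigenvalues
1, 0 and the a_(i,α), and eigenspaces as described; moreover dim A₀ = |C|/2 + n - 2. -/
theorem toral_adjoint_diagonalisable {F : Type*} [Field F] {n : ℕ}
    {C : Submodule (ZMod 2) (Word n)}
    {a : Fin n → Word n → F} {b : Word n → Word n → F} {c : Fin n → Word n → F}
    {A : Type*} [AddCommGroup A] [Module F A]
    (CA : CodeAlgebra F C a b c A)
    (hnd : Nondeg C a b c) (i : Fin n)
    (ha1 : ∀ α, IsStar C α → α i = 1 → a i α ≠ 1)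
    (f : Module.End F A) (hf : f = CA.mul (CA.t i)) :
    -- semisimplicity: A is the (direct) sum of the eigenspaces
    (⨆ μ : F, f.eigenspace μ) = ⊤ ∧
    -- the eigenvalues are exactly 1, 0 and the a_(i,α)
    (∀ μ : F, f.HasEigenvalue μ ↔
      (μ = 1 ∨ μ = 0 ∨ ∃ α, IsStar C α ∧ α i = 1 ∧ a i α = μ)) ∧
    -- the eigenspaces
    f.eigenspace 1 = Submodule.span F {CA.t i} ∧
    f.eigenspace 0 = Submodule.span F
      (CA.t '' {j : Fin n | j ≠ i} ∪ CA.e '' {α : Word n | IsStar C α ∧ α i = 0}) ∧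
    (∀ μ : F, μ ≠ 0 → μ ≠ 1 → f.eigenspace μ =
      Submodule.span F (CA.e '' {β : Word n | IsStar C β ∧ β i = 1 ∧ a i β = μ})) ∧
    -- dimension of the zero eigenspace
    Module.finrank F (f.eigenspace 0) = Nat.card C / 2 + n - 2 := by
  classical
  obtain ⟨hsupp, ⟨α₀s, hα₀s⟩, hane, hbne, hcne⟩ := hnd
  set Star := {α : Word n // IsStar C α} with hStar
  let d : (Fin n ⊕ Star) → F := fun k =>
    match k with
    | Sum.inl j => if j = i then 1 else 0
    | Sum.inr α => if α.1 i = 1 then a i α.1 else 0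
  have hd : ∀ k, f (CA.bas k) = d k • CA.bas k := by
    rintro (j | α)
    · rw [CA.bas_t, hf, CA.t_mul_t]
      by_cases h : j = i
      · subst h; simp [d]
      · simp [d, h, Ne.symm h]
    · rw [CA.bas_e, hf, CA.t_mul_e i α.1 α.2]
      by_cases h : α.1 i = 1 <;> simp [d, h]
  -- the zero diagonal set
  have hs0 : CA.bas '' {k | d k = 0} =
      CA.t '' {j : Fin n | j ≠ i} ∪ CA.e '' {α : Word n | IsStar C α ∧ α i = 0} := by
    ext x
    constructor
    · rintro ⟨(j | α), hk, rfl⟩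
      · simp only [Set.mem_setOf_eq, d] at hk
        have hji : j ≠ i := by
          intro h; rw [if_pos h] at hk; exact one_ne_zero hk
        exact Or.inl ⟨j, hji, (CA.bas_t j).symm⟩
      · simp only [Set.mem_setOf_eq, d] at hk
        have h0 : α.1 i = 0 := by
          rcases zmod2_cases (α.1 i) with h | h
          · exact h
          · rw [if_pos h] at hk; exact absurd hk (hane i α.1 α.2 h)
        exact Or.inr ⟨α.1, ⟨α.2, h0⟩, (CA.bas_e α).symm⟩
    · rintro (⟨j, hj, rfl⟩ | ⟨α, ⟨hs, h0⟩, rfl⟩)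
      · have hj' : j ≠ i := hj
        exact ⟨Sum.inl j, by simp [d, hj'], CA.bas_t j⟩
      · refine ⟨Sum.inr ⟨α, hs⟩, ?_, CA.bas_e ⟨α, hs⟩⟩
        have hne : ¬ (α i = 1) := by rw [h0]; decide
        simp [d, hne]
  refine ⟨diag_iSup CA.bas d f hd, ?_, ?_, ?_, ?_, ?_⟩
  · -- eigenvalues
    intro μ
    rw [diag_hasEigenvalue CA.bas d f hd]
    constructor
    · rintro ⟨(j | α), hk⟩
      · simp only [d] at hk
        by_cases h : j = i
        · rw [if_pos h] at hk; exact Or.inl hk.symm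
        · rw [if_neg h] at hk; exact Or.inr (Or.inl hk.symm)
      · simp only [d] at hk
        by_cases h : α.1 i = 1
        · rw [if_pos h] at hk; exact Or.inr (Or.inr ⟨α.1, α.2, h, hk⟩)
        · rw [if_neg h] at hk; exact Or.inr (Or.inl hk.symm)
    · rintro (rfl | rfl | ⟨α, hs, h1, ha⟩)
      · exact ⟨Sum.inl i, by simp [d]⟩
      · by_cases h : α₀s i = 1
        · have : ∃ j, α₀s j ≠ 1 := by
            by_contra hc
            push_neg at hc
            exact hα₀s.2.2 (funext fun j => hc j)
          obtain ⟨j, hj⟩ := this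
          have hji : j ≠ i := fun hji => hj (hji ▸ h)
          exact ⟨Sum.inl j, by simp [d, hji]⟩
        · exact ⟨Sum.inr ⟨α₀s, hα₀s⟩, by simp [d, h]⟩
      · exact ⟨Sum.inr ⟨α, hs⟩, by simp [d, h1, ha]⟩
  · -- eigenspace 1
    rw [diag_eigenspace CA.bas d f hd 1]
    congr 1
    ext x
    constructor
    · rintro ⟨(j | α), hk, rfl⟩
      · simp only [Set.mem_setOf_eq, d] at hk
        by_cases h : j = i
        · subst h; simp [CA.bas_t]
        · rw [if_neg h] at hk; exact absurd hk.symm one_ne_zero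
      · simp only [Set.mem_setOf_eq, d] at hk
        by_cases h : α.1 i = 1
        · rw [if_pos h] at hk; exact absurd hk (ha1 α.1 α.2 h)
        · rw [if_neg h] at hk; exact absurd hk.symm one_ne_zero
    · rintro rfl
      exact ⟨Sum.inl i, by simp [d], CA.bas_t i⟩
  · -- eigenspace 0
    rw [diag_eigenspace CA.bas d f hd 0, hs0]
  · -- eigenspace μ, μ ≠ 0, 1
    intro μ hμ0 hμ1
    rw [diag_eigenspace CA.bas d f hd μ]
    congr 1
    ext x
    constructor
    · rintro ⟨(j | α), hk, rfl⟩
      · simp only [Set.mem_setOf_eq, d] at hk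
        by_cases h : j = i
        · rw [if_pos h] at hk; exact absurd hk.symm hμ1
        · rw [if_neg h] at hk; exact absurd hk.symm hμ0
      · simp only [Set.mem_setOf_eq, d] at hk
        by_cases h : α.1 i = 1
        · rw [if_pos h] at hk
          exact ⟨α.1, ⟨α.2, h, hk⟩, (CA.bas_e α).symm⟩
        · rw [if_neg h] at hk; exact absurd hk.symm hμ0
    · rintro ⟨β, ⟨hs, h1, ha⟩, rfl⟩
      exact ⟨Sum.inr ⟨β, hs⟩, by simp [d, h1, ha], CA.bas_e ⟨β, hs⟩⟩
  · -- dimension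
    rw [diag_eigenspace CA.bas d f hd 0, diag_finrank]
    -- count {k | d k = 0}
    have hcount : Nat.card {k : Fin n ⊕ Star // d k = 0} =
        Nat.card {j : Fin n // j ≠ i} + Nat.card {α : Star // α.1 i = 0} := by
      rw [Nat.card_congr (Equiv.subtypeSum)]
      rw [Nat.card_sum]
      congr 1
      · apply Nat.card_congr
        apply Equiv.subtypeEquivRight
        intro j
        simp only [d]
        constructor
        · intro h hji; rw [if_pos hji] at h; exact one_ne_zero h
        · intro h; rw [if_neg h]
      · apply Nat.card_congr
        apply Equiv.subtypeEquivRight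
        intro α
        simp only [d]
        constructor
        · intro h
          rcases zmod2_cases (α.1 i) with h0 | h0
          · exact h0
          · rw [if_pos h0] at h; exact absurd h (hane i α.1 α.2 h0)
        · intro h; rw [if_neg (by rw [h]; decide)]
    have hcard1 : Nat.card {j : Fin n // j ≠ i} = n - 1 := by
      rw [Nat.card_eq_fintype_card, Fintype.card_subtype_compl, Fintype.card_subtype_eq,
        Fintype.card_fin]
    -- counting the code halves
    set T0 : Set (Word n) := {α | α ∈ C ∧ α i = 0} with hT0
    set T1 : Set (Word n) := {α | α ∈ C ∧ α i = 1} with hT1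
    have hself : ∀ x : Word n, x + x = 0 := fun x => funext fun j => by
      have : ∀ y : ZMod 2, y + y = 0 := by decide
      simpa using this (x j)
    obtain ⟨α₀, hα₀C, hα₀i⟩ := hsupp i
    have hT1img : T1 = (· + α₀) '' T0 := by
      ext β
      constructor
      · rintro ⟨hβC, hβi⟩
        refine ⟨β + α₀, ⟨C.add_mem hβC hα₀C, ?_⟩, ?_⟩
        · show β i + α₀ i = 0
          rw [hβi, hα₀i]; decide
        · show β + α₀ + α₀ = β
          rw [add_assoc, hself, add_zero]
      · rintro ⟨γ, ⟨hγC, hγi⟩, rfl⟩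
        refine ⟨C.add_mem hγC hα₀C, ?_⟩
        show γ i + α₀ i = 1
        rw [hγi, hα₀i]; decide
    have hinj : Function.Injective (· + α₀ : Word n → Word n) := fun x y h => by
      have := congrArg (· + α₀) h
      simpa [add_assoc, hself] using this
    have hT1card : T1.ncard = T0.ncard := by
      rw [hT1img, Set.ncard_image_of_injective _ hinj]
    have hsplit : (C : Set (Word n)) = T0 ∪ T1 := by
      ext α
      simp only [SetLike.mem_coe, Set.mem_union, hT0, hT1, Set.mem_setOf_eq]
      constructor
      · intro h
        rcases zmod2_cases (α i) with h0 | h0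
        · exact Or.inl ⟨h, h0⟩
        · exact Or.inr ⟨h, h0⟩
      · rintro (⟨h, _⟩ | ⟨h, _⟩) <;> exact h
    have hdisj : Disjoint T0 T1 := by
      rw [Set.disjoint_left]
      rintro α ⟨_, h0⟩ ⟨_, h1⟩
      rw [h0] at h1; exact absurd h1 (by decide)
    have hCcard : Nat.card C = 2 * T0.ncard := by
      have h1 : Nat.card C = (C : Set (Word n)).ncard := by
        rw [← Nat.card_coe_set_eq]; rfl
      rw [h1, hsplit, Set.ncard_union_eq hdisj (Set.toFinite _) (Set.toFinite _),
        hT1card]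
      ring
    have h0T0 : (0 : Word n) ∈ T0 := ⟨C.zero_mem, rfl⟩
    have hT0pos : 0 < T0.ncard :=
      (Set.ncard_pos (Set.toFinite _)).mpr ⟨0, h0T0⟩
    have hcard2 : Nat.card {α : Star // α.1 i = 0} = T0.ncard - 1 := by
      have e1 : {α : Star // α.1 i = 0} ≃ {α : Word n // IsStar C α ∧ α i = 0} :=
        Equiv.subtypeSubtypeEquivSubtypeInter (IsStar C) (fun α => α i = 0)
      have hset : {α : Word n | IsStar C α ∧ α i = 0} = T0 \ {0} := by
        ext α
        simp only [Set.mem_setOf_eq, Set.mem_diff, Set.mem_singleton_iff, hT0, IsStar]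
        constructor
        · rintro ⟨⟨hC, h0, h1⟩, hi⟩; exact ⟨⟨hC, hi⟩, h0⟩
        · rintro ⟨⟨hC, hi⟩, h0⟩
          refine ⟨⟨hC, h0, ?_⟩, hi⟩
          intro h1
          rw [h1, Pi.one_apply] at hi
          exact one_ne_zero hi
      rw [Nat.card_congr e1]
      have : Nat.card {α : Word n // IsStar C α ∧ α i = 0} =
          {α : Word n | IsStar C α ∧ α i = 0}.ncard := Nat.card_coe_set_eq _
      rw [this, hset, Set.ncard_diff_singleton_of_mem h0T0]
    have hn1 : 1 ≤ n := i.pos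
    have hfin : Nat.card ↥{k : Fin n ⊕ Star | d k = 0} =
        Nat.card {k : Fin n ⊕ Star // d k = 0} := rfl
    rw [hfin, hcount, hcard1, hcard2]
    omega
end

section
/- Let A = A_C(Λ) be a non-degenerate code algebra with a_{i,α} ≠ 1 for all i ∈ supp(α), α ∈ C*, and fix i. Then the fusion law for t_i satisfies the Seress condition (A₀(t_i)·A_μ(t_i) ⊆ A_μ(t_i) for all eigenvalues μ ≠ 1 of ad_{t_i}) if and only if ad_{t_i} has at most one eigenvalue not equal to 0 or 1. -/
/- ### Auxiliary lemmas -/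

lemma zmod2_eq_zero {x : ZMod 2} (h : x ≠ 1) : x = 0 := by
  revert h; revert x; decide

lemma word_add_self {n : ℕ} (α : Word n) : α + α = 0 := by
  funext j
  have : ∀ x : ZMod 2, x + x = 0 := by decide
  exact this (α j)

lemma word_add_cancel {n : ℕ} (α β : Word n) : α + β + α = β := by
  rw [add_comm α β, add_assoc, word_add_self, add_zero]

lemma word_add_ne_zero {n : ℕ} {α β : Word n} (h : α ≠ β) : α + β ≠ 0 := by
  intro h0
  apply h
  have := congrArg (· + β) h0
  simpa [add_assoc, word_add_self] using this

section helpers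

variable {F : Type*} [Field F] {n : ℕ} {C : Submodule (ZMod 2) (Word n)}
  {a : Fin n → Word n → F} {b : Word n → Word n → F} {c : Fin n → Word n → F}
  {A : Type*} [AddCommGroup A] [Module F A]

/-- Diagonal entries of ad_(t i) with respect to the canonical basis. -/
def dval (C : Submodule (ZMod 2) (Word n)) (a : Fin n → Word n → F) (i : Fin n) :
    Fin n ⊕ {α : Word n // IsStar C α} → F
  | .inl j => if j = i then 1 else 0
  | .inr α => if α.1 i = 1 then a i α.1 else 0

variable (CA : CodeAlgebra F C a b c A)

lemma f_bas (i : Fin n) (k : Fin n ⊕ {α : Word n // IsStar C α}) :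
    CA.mul (CA.t i) (CA.bas k) = dval C a i k • CA.bas k := by
  cases k with
  | inl j =>
      rw [CA.bas_t, CA.t_mul_t]
      by_cases h : j = i
      · subst h; simp [dval]
      · simp [dval, h, Ne.symm h]
  | inr α =>
      rw [CA.bas_e, CA.t_mul_e i α.1 α.2]
      by_cases h : α.1 i = 1 <;> simp [dval, h]

lemma repr_mul_t (i : Fin n) (x : A) (k : Fin n ⊕ {α : Word n // IsStar C α}) :
    CA.bas.repr (CA.mul (CA.t i) x) k = dval C a i k * CA.bas.repr x k := by
  let R : A →ₗ[F] ((Fin n ⊕ {α : Word n // IsStar C α}) →₀ F) := CA.bas.repr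
  let P : ((Fin n ⊕ {α : Word n // IsStar C α}) →₀ F) →ₗ[F] F := Finsupp.lapply k
  have h : (P ∘ₗ R ∘ₗ CA.mul (CA.t i)) = dval C a i k • (P ∘ₗ R) := by
    apply CA.bas.ext
    intro m
    simp only [P, R, LinearMap.comp_apply, LinearMap.smul_apply, LinearEquiv.coe_coe,
      Finsupp.lapply_apply, f_bas CA i m, map_smul, Module.Basis.repr_self,
      Finsupp.smul_apply, smul_eq_mul, Finsupp.single_apply]
    by_cases hmk : m = k
    · subst hmk; simp
    · simp [hmk]
  have := LinearMap.congr_fun h x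
  simpa [P, R] using this

lemma mem_eig (i : Fin n) (μ : F) (x : A) :
    x ∈ Module.End.eigenspace (CA.mul (CA.t i) : Module.End F A) μ ↔
      ∀ k, CA.bas.repr x k ≠ 0 → dval C a i k = μ := by
  rw [Module.End.mem_eigenspace_iff]
  constructor
  · intro h k hk
    have h2 := congrArg (fun z => CA.bas.repr z k) h
    simp only [map_smul, Finsupp.smul_apply, smul_eq_mul] at h2
    rw [repr_mul_t] at h2
    exact mul_right_cancel₀ hk h2
  · intro h
    apply CA.bas.repr.injective
    ext k
    rw [repr_mul_t, map_smul, Finsupp.smul_apply, smul_eq_mul]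
    by_cases hk : CA.bas.repr x k = 0
    · simp [hk]
    · rw [h k hk]

lemma bas_mem_eig (i : Fin n) (k : Fin n ⊕ {α : Word n // IsStar C α}) :
    CA.bas k ∈ Module.End.eigenspace (CA.mul (CA.t i) : Module.End F A) (dval C a i k) :=
  Module.End.mem_eigenspace_iff.mpr (f_bas CA i k)

lemma has_eig_bas (i : Fin n) (k : Fin n ⊕ {α : Word n // IsStar C α}) :
    Module.End.HasEigenvalue (CA.mul (CA.t i) : Module.End F A) (dval C a i k) :=
  Module.End.hasEigenvalue_of_hasEigenvector ⟨bas_mem_eig CA i k, CA.bas.ne_zero k⟩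

lemma exists_dval (i : Fin n) (μ : F)
    (h : Module.End.HasEigenvalue (CA.mul (CA.t i) : Module.End F A) μ) :
    ∃ k, dval C a i k = μ := by
  obtain ⟨x, hx⟩ := h.exists_hasEigenvector
  have hx0 : CA.bas.repr x ≠ 0 := fun h0 => hx.2 (by
    apply CA.bas.repr.injective; simp [h0])
  obtain ⟨k, hk⟩ := Finsupp.ne_iff.mp hx0
  exact ⟨k, (mem_eig CA i μ x).mp hx.1 k (by simpa using hk)⟩

lemma exists_star_of_eig (i : Fin n) (μ : F)
    (h : Module.End.HasEigenvalue (CA.mul (CA.t i) : Module.End F A) μ) (hμ0 : μ ≠ 0) (hμ1 : μ ≠ 1) :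
    ∃ α : Word n, IsStar C α ∧ α i = 1 ∧ a i α = μ := by
  obtain ⟨k, hk⟩ := exists_dval CA i μ h
  cases k with
  | inl j =>
      simp only [dval] at hk
      by_cases hj : j = i
      · simp [hj] at hk; exact absurd hk.symm hμ1
      · simp [hj] at hk; exact absurd hk.symm hμ0
  | inr α =>
      simp only [dval] at hk
      by_cases hα : α.1 i = 1
      · simp only [hα, if_true] at hk
        exact ⟨α.1, α.2, hα, hk⟩
      · simp [hα] at hk; exact absurd hk.symm hμ0

lemma mem_span_eig (i : Fin n) (μ : F) {x : A}
    (hx : x ∈ Module.End.eigenspace (CA.mul (CA.t i) : Module.End F A) μ) :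
    x ∈ Submodule.span F (CA.bas '' {k | dval C a i k = μ}) := by
  have hmem := (mem_eig CA i μ x).mp hx
  rw [← CA.bas.linearCombination_repr x, Finsupp.linearCombination_apply, Finsupp.sum]
  apply Submodule.sum_mem
  intro k hk
  exact Submodule.smul_mem _ _ (Submodule.subset_span
    ⟨k, hmem k (Finsupp.mem_support_iff.mp hk), rfl⟩)

lemma mul_span_mem {S T : Set A} {W : Submodule F A}
    (h : ∀ s ∈ S, ∀ t ∈ T, CA.mul s t ∈ W) :
    ∀ x ∈ Submodule.span F S, ∀ y ∈ Submodule.span F T, CA.mul x y ∈ W := by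
  intro x hx y hy
  induction hx using Submodule.span_induction with
  | mem s hs =>
      induction hy using Submodule.span_induction with
      | mem u hu => exact h s hs u hu
      | zero => simp
      | add y1 y2 _ _ ih1 ih2 => rw [map_add]; exact W.add_mem ih1 ih2
      | smul r y1 _ ih => rw [map_smul]; exact W.smul_mem r ih
  | zero => simp
  | add x1 x2 _ _ ih1 ih2 =>
      rw [map_add, LinearMap.add_apply]; exact W.add_mem ih1 ih2
  | smul r x1 _ ih =>
      rw [map_smul, LinearMap.smul_apply]; exact W.smul_mem r ih

end helpers

/-- Proposition 3.14: the fusion law for t_i satisfies the Seress condition if and only if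
ad_(t_i) has at most one eigenvalue different from 0 and 1. -/
theorem seress_iff_one_eigenvalue {F : Type*} [Field F] {n : ℕ}
    {C : Submodule (ZMod 2) (Word n)}
    {a : Fin n → Word n → F} {b : Word n → Word n → F} {c : Fin n → Word n → F}
    {A : Type*} [AddCommGroup A] [Module F A]
    (CA : CodeAlgebra F C a b c A)
    (hnd : Nondeg C a b c) (i : Fin n)
    (ha1 : ∀ α, IsStar C α → α i = 1 → a i α ≠ 1)
    (f : Module.End F A) (hf : f = CA.mul (CA.t i)) :
    (∀ μ : F, μ ≠ 1 → f.HasEigenvalue μ →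
      ∀ x ∈ f.eigenspace 0, ∀ y ∈ f.eigenspace μ, CA.mul x y ∈ f.eigenspace μ) ↔
    (∀ μ ν : F, f.HasEigenvalue μ → f.HasEigenvalue ν →
      μ ≠ 0 → μ ≠ 1 → ν ≠ 0 → ν ≠ 1 → μ = ν) := by
  subst hf
  obtain ⟨hsupp, hstar, hA, hB, hC⟩ := hnd
  have e_ne : ∀ (α : Word n) (hα : IsStar C α), CA.e α ≠ 0 := by
    intro α hα
    rw [← CA.bas_e ⟨α, hα⟩]
    exact CA.bas.ne_zero _
  constructor
  · -- Seress ⟹ at most one eigenvalue off {0,1}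
    intro H μ ν hμ hν hμ0 hμ1 hν0 hν1
    obtain ⟨α, hαs, hαi, hαa⟩ := exists_star_of_eig CA i μ hμ hμ0 hμ1
    obtain ⟨β, hβs, hβi, hβa⟩ := exists_star_of_eig CA i ν hν hν0 hν1
    by_cases heq : α = β
    · rw [← hαa, heq, hβa]
    -- γ = α + β is a star word with γ i = 0
    set γ : Word n := α + β with hγdef
    have hγi : γ i = 0 := by
      show α i + β i = 0
      rw [hαi, hβi]; decide
    have hγs : IsStar C γ := by
      refine ⟨C.add_mem hαs.1 hβs.1, word_add_ne_zero heq, ?_⟩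
      intro h1
      have : γ i = 1 := by rw [h1]; rfl
      rw [hγi] at this; exact absurd this (by decide)
    have hγα : γ ≠ α := fun h => by
      rw [h] at hγi; rw [hαi] at hγi; exact absurd hγi (by decide)
    have hγα1 : γ + α ≠ 1 := by
      rw [word_add_cancel]; exact hβs.2.2
    -- e γ ∈ eigenspace 0
    have hmemγ : CA.e γ ∈ Module.End.eigenspace (CA.mul (CA.t i) : Module.End F A) 0 := by
      rw [Module.End.mem_eigenspace_iff, CA.t_mul_e i γ hγs]
      have : γ i ≠ 1 := by rw [hγi]; decide
      simp [this]
    -- e α ∈ eigenspace μ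
    have hmemα : CA.e α ∈ Module.End.eigenspace (CA.mul (CA.t i) : Module.End F A) μ := by
      rw [Module.End.mem_eigenspace_iff, CA.t_mul_e i α hαs, if_pos hαi, hαa]
    have hprod := H μ hμ1 hμ (CA.e γ) hmemγ (CA.e α) hmemα
    rw [CA.e_mul_e γ α hγs hαs hγα hγα1, word_add_cancel] at hprod
    have hb : b γ α ≠ 0 := hB γ α hγs hαs hγα hγα1
    have hmemβ : CA.e β ∈ Module.End.eigenspace (CA.mul (CA.t i) : Module.End F A) μ := by
      have := Submodule.smul_mem _ (b γ α)⁻¹ hprod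
      rwa [smul_smul, inv_mul_cancel₀ hb, one_smul] at this
    rw [Module.End.mem_eigenspace_iff, CA.t_mul_e i β hβs, if_pos hβi] at hmemβ
    have : (a i β - μ) • CA.e β = 0 := by
      rw [sub_smul, hmemβ, sub_self]
    rcases smul_eq_zero.mp this with h | h
    · rw [← hαa] at *  -- not needed; just derive
      rw [← hβa, ← sub_eq_zero]
      rw [sub_eq_zero] at h
      rw [← h]
      rw [sub_eq_zero]
    · exact absurd h (e_ne β hβs)
  · -- at most one eigenvalue ⟹ Seress
    intro H μ hμ1 hμ x hx y hy
    refine mul_span_mem CA ?_ x (mem_span_eig CA i 0 hx) y (mem_span_eig CA i μ hy)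
    rintro s ⟨k, hk, rfl⟩ u ⟨l, hl, rfl⟩
    simp only [Set.mem_setOf_eq] at hk hl
    cases k with
    | inl j =>
        have hji : j ≠ i := by
          intro h; simp [dval, h] at hk
        cases l with
        | inl m =>
            -- μ must be 0 here
            have hμ0 : μ = 0 := by
              by_cases hm : m = i
              · simp [dval, hm] at hl; exact absurd hl.symm hμ1
              · simp [dval, hm] at hl; exact hl.symm
            rw [CA.bas_t, CA.bas_t, CA.t_mul_t]
            by_cases hjm : j = m
            · rw [if_pos hjm]
              have := bas_mem_eig CA i (Sum.inl j)
              rw [CA.bas_t] at this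
              have hdj : dval C a i (Sum.inl j) = μ := by simp [dval, hji, hμ0]
              rwa [hdj] at this
            · rw [if_neg hjm]; exact Submodule.zero_mem _
        | inr β =>
            rw [CA.bas_t, CA.bas_e, CA.t_mul_e j β.1 β.2]
            have hmem : CA.e β.1 ∈
                Module.End.eigenspace (CA.mul (CA.t i) : Module.End F A) μ := by
              have := bas_mem_eig CA i (Sum.inr β)
              rw [CA.bas_e, hl] at this
              exact this
            by_cases h : β.1 j = 1
            · rw [if_pos h]; exact Submodule.smul_mem _ _ hmem
            · rw [if_neg h]; exact Submodule.zero_mem _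
    | inr γ =>
        have hγi : γ.1 i = 0 := by
          by_cases h : γ.1 i = 1
          · simp only [dval, if_pos h] at hk
            exact absurd hk (hA i γ.1 γ.2 h)
          · exact zmod2_eq_zero h
        have hγi' : γ.1 i ≠ 1 := by rw [hγi]; decide
        have hmemγ0 : CA.e γ.1 ∈
            Module.End.eigenspace (CA.mul (CA.t i) : Module.End F A) 0 := by
          have := bas_mem_eig CA i (Sum.inr γ)
          rw [CA.bas_e] at this
          simpa [dval, hγi'] using this
        cases l with
        | inl m =>
            have hμ0 : μ = 0 := by
              by_cases hm : m = i
              · simp [dval, hm] at hl; exact absurd hl.symm hμ1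
              · simp [dval, hm] at hl; exact hl.symm
            rw [CA.bas_e, CA.bas_t, CA.mul_comm, CA.t_mul_e m γ.1 γ.2]
            rw [hμ0]
            by_cases h : γ.1 m = 1
            · rw [if_pos h]; exact Submodule.smul_mem _ _ hmemγ0
            · rw [if_neg h]; exact Submodule.zero_mem _
        | inr β =>
            rw [CA.bas_e, CA.bas_e]
            by_cases heq : γ.1 = β.1
            · -- e γ · e γ, and μ = 0
              have hβi : β.1 i ≠ 1 := by rw [← heq]; exact hγi'
              have hμ0 : μ = 0 := by simp [dval, hβi] at hl; exact hl.symm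
              rw [← heq, CA.e_mul_self γ.1 γ.2, hμ0]
              apply Submodule.sum_mem
              intro j hj
              have hjγ : γ.1 j = 1 := by
                simpa [wsupp] using hj
              have hji : j ≠ i := fun h => by rw [h, hγi] at hjγ; exact absurd hjγ (by decide)
              apply Submodule.smul_mem
              have := bas_mem_eig CA i (Sum.inl j)
              rw [CA.bas_t] at this
              simpa [dval, hji] using this
            · by_cases hcompl : γ.1 + β.1 = 1
              · rw [CA.e_mul_compl γ.1 β.1 γ.2 β.2 hcompl]
                exact Submodule.zero_mem _
              · rw [CA.e_mul_e γ.1 β.1 γ.2 β.2 heq hcompl]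
                set δ : Word n := γ.1 + β.1 with hδdef
                have hδs : IsStar C δ :=
                  ⟨C.add_mem γ.2.1 β.2.1, word_add_ne_zero heq, hcompl⟩
                have hδi : δ i = β.1 i := by
                  show γ.1 i + β.1 i = β.1 i
                  rw [hγi, zero_add]
                apply Submodule.smul_mem
                by_cases hβi : β.1 i = 1
                · -- μ = a i β, and a i δ is another eigenvalue off {0,1}
                  have hμval : μ = a i β.1 := by
                    simp [dval, hβi] at hl; exact hl.symm
                  have hδi1 : δ i = 1 := by rw [hδi, hβi]
                  have heigδ : Module.End.HasEigenvalue (CA.mul (CA.t i) : Module.End F A) (a i δ) := by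
                    have := has_eig_bas CA i (Sum.inr ⟨δ, hδs⟩)
                    simpa [dval, hδi1] using this
                  have hδeq : a i δ = μ := by
                    refine (H μ (a i δ) hμ heigδ ?_ hμ1 ?_ ?_).symm
                    · rw [hμval]; exact hA i β.1 β.2 hβi
                    · exact hA i δ hδs hδi1
                    · exact ha1 δ hδs hδi1
                  have := bas_mem_eig CA i (Sum.inr ⟨δ, hδs⟩)
                  rw [CA.bas_e] at this
                  simp only [dval, hδi1, if_true] at this
                  rwa [hδeq] at this
                · -- μ = 0 and δ i = 0
                  have hμ0 : μ = 0 := by simp [dval, hβi] at hl; exact hl.symm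
                  have hδi' : δ i ≠ 1 := by rw [hδi]; exact hβi
                  have := bas_mem_eig CA i (Sum.inr ⟨δ, hδs⟩)
                  rw [CA.bas_e] at this
                  rw [hμ0]
                  simpa [dval, hδi'] using this
end
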